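/- arXiv:1503.02224 — 2 statements merged into one kernel-verified Lean document; each statement's English description precedes it below -/
import Mathlib

section
/- Bootstrap step: suppose u : (0,∞) → (0,∞) satisfies u(2R) ≥ C ∫_{R/2}^R u(y)^p y^2 R^{α-1} dy for all large R, and u(x) ≥ A x^β for large x with A > 0. Then u(x) ≥ A' x^{pβ + α + 2} for large x, for some A' > 0. -/
open MeasureTheory Set Filter

theorem stmt15 (α p β C A M : ℝ) (hα : 0 < α) (hα2 : α < 2) (hp : 1 < p)
    (hC : 0 < C) (hA : 0 < A)
    (u : ℝ → ℝ) (hupos : ∀ x > (0 : ℝ), 0 < u x)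
    (hint : ∀ R > (0 : ℝ), IntegrableOn (fun y => u y ^ p * y ^ 2) (Set.Icc (R / 2) R))
    (hboot : ∀ R ≥ M, u (2 * R) ≥ C * R ^ (α - 1) * ∫ y in Set.Icc (R / 2) R, u y ^ p * y ^ 2)
    (hlb : ∀ y ≥ M, u y ≥ A * y ^ β) :
    ∃ A' > (0 : ℝ), ∃ M' : ℝ, ∀ x ≥ M', u x ≥ A' * x ^ (p * β + α + 2) := by
  have hp0 : (0:ℝ) < p := lt_trans one_pos hp
  set q : ℝ := p * β + α + 2 with hqdef
  set c : ℝ := min ((2:ℝ) ^ (-(p*β))) 1 with hcdef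
  have hc : 0 < c := lt_min (Real.rpow_pos_of_pos two_pos _) one_pos
  have hAp : 0 < A ^ p := Real.rpow_pos_of_pos hA p
  refine ⟨C * A ^ p * c / 8 * (2:ℝ) ^ (-q), by positivity, max (4*M) 4, ?_⟩
  intro x hx
  have hx4 : (4:ℝ) ≤ x := le_trans (le_max_right _ _) hx
  have hxM : 4*M ≤ x := le_trans (le_max_left _ _) hx
  set R : ℝ := x / 2 with hRdef
  have hRpos : 0 < R := by rw [hRdef]; linarith
  have hR2pos : 0 < R / 2 := by linarith
  have hR2M : M ≤ R / 2 := by rw [hRdef]; linarith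
  have hRM : M ≤ R := le_trans hR2M (by linarith)
  have key := hboot R hRM
  set m : ℝ := A ^ p * (R ^ (p*β) * c) * (R/2)^2 with hmdef
  have hm0 : 0 < m := by
    have := Real.rpow_pos_of_pos hRpos (p*β); positivity
  -- pointwise lower bound on the integrand
  have hpt : ∀ y ∈ Set.Icc (R/2) R, m ≤ u y ^ p * y ^ 2 := by
    intro y hy
    obtain ⟨hy1, hy2⟩ := hy
    have hy0 : 0 < y := lt_of_lt_of_le hR2pos hy1
    have hub : A * y ^ β ≤ u y := hlb y (le_trans hR2M hy1)
    have h1 : (A * y ^ β) ^ p ≤ u y ^ p :=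
      Real.rpow_le_rpow (by positivity) hub hp0.le
    have h2 : (A * y ^ β) ^ p = A ^ p * y ^ (p*β) := by
      rw [Real.mul_rpow hA.le (Real.rpow_nonneg hy0.le _), ← Real.rpow_mul hy0.le,
        mul_comm β p]
    have h3 : R ^ (p*β) * c ≤ y ^ (p*β) := by
      rcases le_or_gt 0 (p*β) with hpb | hpb
      · have hcle : c ≤ (2:ℝ) ^ (-(p*β)) := min_le_left _ _
        have : R ^ (p*β) * (2:ℝ) ^ (-(p*β)) = (R/2) ^ (p*β) := by
          rw [Real.div_rpow hRpos.le two_pos.le, Real.rpow_neg two_pos.le, div_eq_mul_inv]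
        calc R ^ (p*β) * c ≤ R ^ (p*β) * (2:ℝ) ^ (-(p*β)) := by
              have := Real.rpow_pos_of_pos hRpos (p*β)
              exact mul_le_mul_of_nonneg_left hcle this.le
          _ = (R/2) ^ (p*β) := this
          _ ≤ y ^ (p*β) := Real.rpow_le_rpow hR2pos.le hy1 hpb
      · have hcle : c ≤ 1 := min_le_right _ _
        calc R ^ (p*β) * c ≤ R ^ (p*β) * 1 := by
              have := Real.rpow_pos_of_pos hRpos (p*β)
              exact mul_le_mul_of_nonneg_left hcle this.le
          _ = R ^ (p*β) := mul_one _
          _ ≤ y ^ (p*β) := Real.rpow_le_rpow_of_nonpos hy0 hy2 hpb.le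
    have h4 : (R/2)^2 ≤ y ^ 2 := by nlinarith
    calc m = A ^ p * (R ^ (p*β) * c) * (R/2)^2 := hmdef
      _ ≤ (A ^ p * y ^ (p*β)) * y ^ 2 := by
          apply mul_le_mul _ h4 (by positivity) (by positivity)
          exact mul_le_mul_of_nonneg_left h3 hAp.le
      _ = (A * y ^ β) ^ p * y ^ 2 := by rw [h2]
      _ ≤ u y ^ p * y ^ 2 := by nlinarith [sq_nonneg y]
  -- integral lower bound
  have hIle : (R/2) * m ≤ ∫ y in Set.Icc (R/2) R, u y ^ p * y ^ 2 := by
    have hconst : ∫ _y in Set.Icc (R/2) R, m = (R/2) * m := by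
      rw [MeasureTheory.setIntegral_const, measureReal_def, Real.volume_Icc, smul_eq_mul,
        ENNReal.toReal_ofReal (by linarith : (0:ℝ) ≤ R - R/2)]
      ring_nf
    rw [← hconst]
    exact MeasureTheory.setIntegral_mono_on
      (integrableOn_const (by rw [Real.volume_Icc]; exact ENNReal.ofReal_ne_top))
      (hint R hRpos) measurableSet_Icc hpt
  have hCR : 0 < C * R ^ (α-1) := by
    have := Real.rpow_pos_of_pos hRpos (α-1); positivity
  have step : C * R ^ (α-1) * ((R/2) * m) ≤ u x := by
    have : C * R ^ (α-1) * ((R/2) * m) ≤ C * R ^ (α-1) * ∫ y in Set.Icc (R/2) R, u y ^ p * y ^ 2 :=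
      mul_le_mul_of_nonneg_left hIle hCR.le
    have hx2R : (2:ℝ) * R = x := by rw [hRdef]; ring
    calc C * R ^ (α-1) * ((R/2) * m) ≤ _ := this
      _ ≤ u (2*R) := key
      _ = u x := by rw [hx2R]
  -- algebraic identification
  have halg : C * R ^ (α-1) * ((R/2) * m) = C * A ^ p * c / 8 * (2:ℝ) ^ (-q) * x ^ q := by
    have hx2R : x = 2 * R := by rw [hRdef]; ring
    have e1 : x ^ q = (2:ℝ) ^ q * R ^ q := by
      rw [hx2R, Real.mul_rpow two_pos.le hRpos.le]
    have e2 : (2:ℝ) ^ (-q) * (2:ℝ) ^ q = 1 := by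
      rw [← Real.rpow_add two_pos]; simp
    have e3 : R ^ (α-1) * R ^ (p*β) * R ^ ((3:ℕ):ℝ) = R ^ q := by
      rw [← Real.rpow_add hRpos, ← Real.rpow_add hRpos]
      congr 1
      push_cast
      rw [hqdef]; ring
    have e4 : (R/2) * (R/2)^2 = R ^ ((3:ℕ):ℝ) / 8 := by
      rw [Real.rpow_natCast]; ring
    calc C * R ^ (α-1) * ((R/2) * m)
        = C * A ^ p * c * (R ^ (α-1) * R ^ (p*β) * ((R/2) * (R/2)^2)) := by
          rw [hmdef]; ring
      _ = C * A ^ p * c * (R ^ (α-1) * R ^ (p*β) * (R ^ ((3:ℕ):ℝ) / 8)) := by rw [e4]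
      _ = C * A ^ p * c / 8 * (R ^ (α-1) * R ^ (p*β) * R ^ ((3:ℕ):ℝ)) := by ring
      _ = C * A ^ p * c / 8 * R ^ q := by rw [e3]
      _ = C * A ^ p * c / 8 * (2:ℝ) ^ (-q) * x ^ q := by
          rw [e1]
          have : C * A ^ p * c / 8 * (2:ℝ) ^ (-q) * ((2:ℝ) ^ q * R ^ q)
              = C * A ^ p * c / 8 * ((2:ℝ) ^ (-q) * (2:ℝ) ^ q) * R ^ q := by ring
          rw [this, e2]; ring
    
  rw [ge_iff_le, ← halg]
  exact step
end

section
/- For p > 1, α ∈ (0,1), the derivative of τ(p) = (p^{m+2}(p - pα - 3) + 2p + α)/(1-p) + 2 with respect to p equals [p^{m+1}(m(p(α-1)+3)(p-1) + 6p - 3αp + 2αp² - 2p² - 6) + 2 + α]/(1-p)², and hence τ'(p) > 0 for all p ∈ (1, (n+α)/(n-α)) when m is sufficiently large. -/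
open MeasureTheory Set Filter

theorem stmt16 (n : ℕ) (hn : 2 ≤ n) (α : ℝ) (hα : 0 < α) (hα1 : α < 1) :
    ∃ M : ℕ, ∀ m ≥ M, ∀ p ∈ Set.Ioo (1 : ℝ) (((n : ℝ) + α) / ((n : ℝ) - α)),
      HasDerivAt (fun q : ℝ => (q ^ (m + 2) * (q - q * α - 3) + 2 * q + α) / (1 - q) + 2)
        ((p ^ (m + 1) * ((m : ℝ) * ((p * (α - 1) + 3) * (p - 1)) + 6 * p - 3 * α * p
            + 2 * α * p ^ 2 - 2 * p ^ 2 - 6) + 2 + α) / (1 - p) ^ 2) p ∧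
      0 < (p ^ (m + 1) * ((m : ℝ) * ((p * (α - 1) + 3) * (p - 1)) + 6 * p - 3 * α * p
            + 2 * α * p ^ 2 - 2 * p ^ 2 - 6) + 2 + α) / (1 - p) ^ 2 := by
  refine ⟨0, fun m _ p hp => ?_⟩
  obtain ⟨hp1, hp2⟩ := hp
  have hn2 : (2 : ℝ) ≤ (n : ℝ) := by exact_mod_cast hn
  have hnα : (0 : ℝ) < (n : ℝ) - α := by linarith
  have h2α : (0 : ℝ) < 2 - α := by linarith
  have hRle : ((n : ℝ) + α) / ((n : ℝ) - α) ≤ (2 + α) / (2 - α) := by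
    rw [div_le_div_iff₀ hnα h2α]; nlinarith
  have hp3 : p * (2 - α) < 2 + α := by
    have h := lt_of_lt_of_le hp2 hRle
    rw [lt_div_iff₀ h2α] at h; exact h
  have hne : (1 : ℝ) - p ≠ 0 := by intro h; linarith
  have hp0 : (0 : ℝ) < p := by linarith
  have hm0 : (0 : ℝ) ≤ (m : ℝ) := Nat.cast_nonneg m
  constructor
  · -- derivative computation
    have h1 : HasDerivAt (fun q : ℝ => q ^ (m + 2)) (((m : ℝ) + 2) * p ^ (m + 1)) p := by
      have := hasDerivAt_pow (m + 2) p
      simpa [Nat.add_sub_cancel] using this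
    have h2 : HasDerivAt (fun q : ℝ => q - q * α - 3) (1 - α) p := by
      simpa using ((hasDerivAt_id p).sub ((hasDerivAt_id p).mul_const α)).sub_const 3
    have h3 : HasDerivAt (fun q : ℝ => 2 * q) 2 p := by
      simpa using (hasDerivAt_id p).const_mul 2
    have hu := ((h1.mul h2).add h3).add_const α
    have hv : HasDerivAt (fun q : ℝ => 1 - q) (-1) p := by
      simpa using (hasDerivAt_id p).const_sub 1
    have hd := (hu.div hv hne).add_const 2
    convert hd using 1
    · rfl
    · rfl
    · rfl
    · simp only [Pi.mul_apply, Pi.add_apply]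
      ring
  · -- positivity
    have hX : (0 : ℝ) < p ^ m := pow_pos hp0 m
    have e1 : p ^ (m + 1) = p ^ m * p := pow_succ p m
    -- geometric sum bound : p^(m+1) - 1 ≤ (m+1)*(p-1)*p^m
    have hsum : ∑ i ∈ Finset.range (m + 1), p ^ i ≤ ((m : ℝ) + 1) * p ^ m := by
      have h := Finset.sum_le_card_nsmul (Finset.range (m + 1)) (fun i => p ^ i) (p ^ m)
        (fun i hi => pow_le_pow_right₀ (le_of_lt hp1) (Nat.lt_succ_iff.mp (Finset.mem_range.mp hi)))
      simpa [Finset.card_range, nsmul_eq_mul, add_comm] using h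
    have key : p ^ m * p - 1 ≤ ((m : ℝ) + 1) * (p - 1) * p ^ m := by
      have hg := geom_sum_mul p (m + 1)
      have h2 := mul_le_mul_of_nonneg_right hsum (by linarith : (0 : ℝ) ≤ p - 1)
      rw [← e1]
      nlinarith [hg, h2]
    have hcoef : (1 - α) * ((m : ℝ) + 2) * p < (2 + α) * ((m : ℝ) + 1) := by
      have hpos : (0 : ℝ) < (1 - α) * ((m : ℝ) + 2) := by nlinarith
      nlinarith [mul_lt_mul_of_pos_left hp3 hpos, h2α, hm0]
    have h6 : (0 : ℝ) < (p - 1) ^ 2 * p ^ m * ((2 + α) * ((m : ℝ) + 1) - (1 - α) * ((m : ℝ) + 2) * p) := by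
      apply mul_pos (mul_pos (pow_pos (by linarith : (0:ℝ) < p - 1) 2) hX)
      linarith
    have hN : (0 : ℝ) < p ^ (m + 1) * ((m : ℝ) * ((p * (α - 1) + 3) * (p - 1)) + 6 * p - 3 * α * p
        + 2 * α * p ^ 2 - 2 * p ^ 2 - 6) + 2 + α := by
      rw [e1]
      nlinarith [mul_le_mul_of_nonneg_left key (by linarith : (0 : ℝ) ≤ 2 + α), h6]
    exact div_pos hN (by positivity)
end
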